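/- arXiv:math/0010149 — 11 statements merged into one kernel-verified Lean document; each statement's English description precedes it below -/
import Mathlib

section
/- For all natural numbers n, the sum over i from 0 to n of C(n,i)·F_i equals F_{2n}, where F_i is the i-th Fibonacci number. -/
open Finset

lemma pascal_sum (n : ℕ) (f : ℕ → ℕ) :
    ∑ i ∈ range (n + 2), (n + 1).choose i * f i =
      ∑ i ∈ range (n + 1), n.choose i * f i +
      ∑ i ∈ range (n + 1), n.choose i * f (i + 1) := by
  rw [Finset.sum_range_succ' (fun i => (n + 1).choose i * f i)]
  simp only [Nat.choose_succ_succ', add_mul, Finset.sum_add_distrib, Nat.choose_zero_right]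
  have h1 : ∑ i ∈ range (n + 1), n.choose (i + 1) * f (i + 1) =
      ∑ i ∈ range n, n.choose (i + 1) * f (i + 1) := by
    rw [Finset.sum_range_succ, Nat.choose_succ_self, zero_mul, add_zero]
  have h2 : ∑ i ∈ range (n + 1), n.choose i * f i =
      ∑ i ∈ range n, n.choose (i + 1) * f (i + 1) + f 0 := by
    rw [Finset.sum_range_succ' (fun i => n.choose i * f i)]
    simp
  rw [h2]
  omega

lemma both (n : ℕ) :
    (∑ i ∈ range (n + 1), n.choose i * Nat.fib i = Nat.fib (2 * n)) ∧
    (∑ i ∈ range (n + 1), n.choose i * Nat.fib (i + 1) = Nat.fib (2 * n + 1)) := by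
  induction n with
  | zero => simp
  | succ n ih =>
    obtain ⟨hA, hB⟩ := ih
    constructor
    · rw [show n + 1 + 1 = n + 2 by rfl, pascal_sum n (fun i => Nat.fib i), hA, hB,
        show 2 * (n + 1) = 2 * n + 1 + 1 by ring, Nat.fib_add_two]
    · rw [show n + 1 + 1 = n + 2 by rfl, pascal_sum n (fun i => Nat.fib (i + 1)), hB]
      have : ∑ i ∈ range (n + 1), n.choose i * Nat.fib (i + 1 + 1) =
          ∑ i ∈ range (n + 1), n.choose i * Nat.fib i +
          ∑ i ∈ range (n + 1), n.choose i * Nat.fib (i + 1) := by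
        simp only [Nat.fib_add_two, mul_add, Finset.sum_add_distrib]
      rw [this, hA, hB, show 2 * (n + 1) + 1 = 2 * n + 1 + 1 + 1 by ring,
        Nat.fib_add_two, Nat.fib_add_two]

theorem stmt_2 (n : ℕ) :
    ∑ i ∈ Finset.range (n + 1), n.choose i * Nat.fib i = Nat.fib (2 * n) := by
  exact (both n).1
end

section
/- For all natural numbers n, the sum over i from 0 to 2n of C(2n,i)·F_i^2 equals 5^{n-1}·L_{2n} when n ≥ 1, where L denotes the Lucas sequence. -/
def lucas : ℕ → ℤ
  | 0 => 2
  | 1 => 1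
  | n + 2 => lucas (n + 1) + lucas n

open Finset

lemma key (m : ℕ) (g : ℕ → ℤ) :
    ∑ i ∈ range (m + 2), ((m + 1).choose i : ℤ) * g i
      = ∑ i ∈ range (m + 1), (m.choose i : ℤ) * (g i + g (i + 1)) := by
  rw [Finset.sum_range_succ' _ (m + 1)]
  have h1 : ∀ i, ((m + 1).choose (i + 1) : ℤ) = m.choose i + m.choose (i + 1) := by
    intro i; exact_mod_cast congrArg Nat.cast (Nat.choose_succ_succ' m i)
  simp only [h1, add_mul]
  rw [Finset.sum_add_distrib]
  have h2 : ∑ i ∈ range (m + 1), (m.choose (i + 1) : ℤ) * g (i + 1)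
      = ∑ i ∈ range (m + 1), (m.choose i : ℤ) * g i - g 0 := by
    rw [Finset.sum_range_succ, Nat.choose_succ_self]
    rw [Finset.sum_range_succ' (fun i => (m.choose i : ℤ) * g i) m]
    simp
  rw [h2]
  simp only [Nat.choose_zero_right, Nat.cast_one, one_mul, mul_add, Finset.sum_add_distrib]
  ring

def S (m : ℕ) : ℤ := ∑ i ∈ range (m + 1), (m.choose i : ℤ) * (Nat.fib i : ℤ) ^ 2
def T (m : ℕ) : ℤ := ∑ i ∈ range (m + 1), (m.choose i : ℤ) * ((Nat.fib i : ℤ) * Nat.fib (i + 1))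
def U (m : ℕ) : ℤ := ∑ i ∈ range (m + 1), (m.choose i : ℤ) * (Nat.fib (i + 1) : ℤ) ^ 2

lemma fib2 (i : ℕ) : (Nat.fib (i + 2) : ℤ) = Nat.fib i + Nat.fib (i + 1) := by
  rw [Nat.fib_add_two]; push_cast; ring

lemma stepS (m : ℕ) : S (m + 1) = S m + U m := by
  unfold S U
  rw [key m (fun i => (Nat.fib i : ℤ) ^ 2), ← Finset.sum_add_distrib]
  exact Finset.sum_congr rfl fun i _ => by ring

lemma stepT (m : ℕ) : T (m + 1) = 2 * T m + U m := by
  unfold T U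
  rw [key m (fun i => (Nat.fib i : ℤ) * Nat.fib (i + 1))]
  rw [Finset.mul_sum, ← Finset.sum_add_distrib]
  refine Finset.sum_congr rfl fun i _ => ?_
  simp only [fib2]; ring

lemma stepU (m : ℕ) : U (m + 1) = S m + 2 * T m + 2 * U m := by
  unfold S T U
  rw [key m (fun i => (Nat.fib (i + 1) : ℤ) ^ 2)]
  rw [Finset.mul_sum, Finset.mul_sum, ← Finset.sum_add_distrib, ← Finset.sum_add_distrib]
  refine Finset.sum_congr rfl fun i _ => ?_
  simp only [fib2]; ring

lemma main (n : ℕ) : S (2 * n + 2) = 5 ^ n * lucas (2 * n + 2)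
    ∧ T (2 * n + 2) = 5 ^ n * lucas (2 * n + 3)
    ∧ U (2 * n + 2) = 5 ^ n * lucas (2 * n + 4) := by
  induction n with
  | zero =>
    refine ⟨?_, ?_, ?_⟩ <;>
      simp [S, T, U, Finset.sum_range_succ, lucas,
        show Nat.fib 2 = 1 from rfl, show Nat.fib 3 = 2 from rfl]
  | succ k ih =>
    obtain ⟨hS, hT, hU⟩ := ih
    have s1 : S (2 * k + 3) = S (2 * k + 2) + U (2 * k + 2) := stepS _
    have s2 : T (2 * k + 3) = 2 * T (2 * k + 2) + U (2 * k + 2) := stepT _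
    have s3 : U (2 * k + 3) = S (2 * k + 2) + 2 * T (2 * k + 2) + 2 * U (2 * k + 2) := stepU _
    have s4 : S (2 * k + 4) = S (2 * k + 3) + U (2 * k + 3) := stepS _
    have s5 : T (2 * k + 4) = 2 * T (2 * k + 3) + U (2 * k + 3) := stepT _
    have s6 : U (2 * k + 4) = S (2 * k + 3) + 2 * T (2 * k + 3) + 2 * U (2 * k + 3) := stepU _
    have l2 : lucas (2 * k + 4) = lucas (2 * k + 3) + lucas (2 * k + 2) := rfl
    have l3 : lucas (2 * k + 5) = lucas (2 * k + 4) + lucas (2 * k + 3) := rfl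
    have l4 : lucas (2 * k + 6) = lucas (2 * k + 5) + lucas (2 * k + 4) := rfl
    refine ⟨?_, ?_, ?_⟩
    · show S (2 * k + 4) = 5 ^ (k + 1) * lucas (2 * k + 4)
      rw [s4, s1, s3, hS, hT, hU, l2]; ring
    · show T (2 * k + 4) = 5 ^ (k + 1) * lucas (2 * k + 5)
      rw [s5, s2, s3, hS, hT, hU, l3, l2]; ring
    · show U (2 * k + 4) = 5 ^ (k + 1) * lucas (2 * k + 6)
      rw [s6, s1, s2, s3, hS, hT, hU, l4, l3, l2]; ring

theorem stmt_3 (n : ℕ) (hn : 1 ≤ n) :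
    ∑ i ∈ Finset.range (2 * n + 1), ((2 * n).choose i : ℤ) * (Nat.fib i : ℤ) ^ 2 =
      5 ^ (n - 1) * lucas (2 * n) := by
  obtain ⟨k, rfl⟩ := Nat.exists_eq_add_of_le hn
  have h := (main k).1
  unfold S at h
  rw [show 2 * (1 + k) = 2 * k + 2 by ring, show 1 + k - 1 = k by omega]
  exact h
end

section
/- For all natural numbers n, the sum over i from 0 to 2n+1 of C(2n+1,i)·F_i^2 equals 5^n·F_{2n+1}. -/
open Zsqrtd Finset

private def aa : ℤ√5 := ⟨1, 1⟩
private def bb : ℤ√5 := ⟨1, -1⟩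
private def ss : ℤ√5 := ⟨0, 1⟩

private lemma aa_sq : aa ^ 2 = 2 * aa + 4 := by decide
private lemma bb_sq : bb ^ 2 = 2 * bb + 4 := by decide
private lemma ss_sq : ss ^ 2 = 5 := by decide
private lemma ab_mul : aa * bb = -4 := by decide
private lemma aa_key : aa ^ 2 + 4 = 2 * ss * aa := by decide
private lemma bb_key : bb ^ 2 + 4 = -(2 * ss * bb) := by decide
private lemma ab_diff : aa - bb = 2 * ss := by decide

private lemma pow_diff (i : ℕ) :
    aa ^ i - bb ^ i = 2 ^ i * (Nat.fib i : ℤ√5) * ss := by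
  induction i using Nat.twoStepInduction with
  | zero => simp
  | one => simpa using ab_diff
  | more i ih1 ih2 =>
    have ha : aa ^ (i + 2) = 2 * aa ^ (i + 1) + 4 * aa ^ i := by
      have : aa ^ (i + 2) = aa ^ i * aa ^ 2 := by ring
      rw [this, aa_sq]; ring
    have hb : bb ^ (i + 2) = 2 * bb ^ (i + 1) + 4 * bb ^ i := by
      have : bb ^ (i + 2) = bb ^ i * bb ^ 2 := by ring
      rw [this, bb_sq]; ring
    have hsum : aa ^ (i + 2) - bb ^ (i + 2)
        = 2 * (aa ^ (i + 1) - bb ^ (i + 1)) + 4 * (aa ^ i - bb ^ i) := by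
      rw [ha, hb]; ring
    rw [hsum, ih1, ih2, Nat.fib_add_two]
    push_cast
    ring

private lemma pow_sum (i : ℕ) :
    aa ^ (2 * i) + bb ^ (2 * i)
      = 5 * (Nat.fib i : ℤ√5) ^ 2 * 4 ^ i + 2 * (-4) ^ i := by
  have h := pow_diff i
  have hsq : (aa ^ i - bb ^ i) ^ 2
      = aa ^ (2 * i) + bb ^ (2 * i) - 2 * (aa * bb) ^ i := by
    rw [mul_pow, pow_mul, pow_mul]; ring
  have h2 : (2 ^ i * (Nat.fib i : ℤ√5) * ss) ^ 2
      = 5 * (Nat.fib i : ℤ√5) ^ 2 * 4 ^ i := by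
    have h4i : (2 : ℤ√5) ^ i * 2 ^ i = 4 ^ i := by rw [← mul_pow]; norm_num
    calc (2 ^ i * (Nat.fib i : ℤ√5) * ss) ^ 2
        = 2 ^ i * 2 ^ i * (Nat.fib i : ℤ√5) ^ 2 * ss ^ 2 := by ring
      _ = 4 ^ i * (Nat.fib i : ℤ√5) ^ 2 * 5 := by rw [h4i, ss_sq]
      _ = 5 * (Nat.fib i : ℤ√5) ^ 2 * 4 ^ i := by ring
  have := hsq.symm.trans (by rw [h, h2])
  rw [ab_mul] at this
  linear_combination this

theorem stmt_4 (n : ℕ) :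
    ∑ i ∈ Finset.range (2 * n + 2), (2 * n + 1).choose i * Nat.fib i ^ 2 =
      5 ^ n * Nat.fib (2 * n + 1) := by
  set m := 2 * n + 1 with hm
  have key : ((5 * 4 ^ m * ∑ i ∈ Finset.range (m + 1), m.choose i * Nat.fib i ^ 2 : ℕ) : ℤ√5)
      = ((5 * 4 ^ m * (5 ^ n * Nat.fib m) : ℕ) : ℤ√5) := by
    push_cast
    -- LHS of the binomial identity
    have h1 : (aa ^ 2 + 4) ^ m + (bb ^ 2 + 4) ^ m
        = ∑ i ∈ Finset.range (m + 1),
            (aa ^ (2 * i) + bb ^ (2 * i)) * 4 ^ (m - i) * (m.choose i : ℤ√5) := by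
      rw [add_pow, add_pow, ← Finset.sum_add_distrib]
      refine Finset.sum_congr rfl fun i _ => ?_
      rw [pow_mul, pow_mul]; ring
    have hodd : Odd m := ⟨n, by omega⟩
    have h2 : (aa ^ 2 + 4) ^ m + (bb ^ 2 + 4) ^ m
        = 4 ^ m * 5 ^ (n + 1) * (Nat.fib m : ℤ√5) := by
      rw [aa_key, bb_key, hodd.neg_pow, ← sub_eq_add_neg]
      have : (2 * ss * aa) ^ m - (2 * ss * bb) ^ m
          = 2 ^ m * ss ^ m * (aa ^ m - bb ^ m) := by
        rw [mul_pow, mul_pow, mul_pow, mul_pow]; ring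
      rw [this, pow_diff]
      have hs : ss ^ m * ss = 5 ^ (n + 1) := by
        have : ss ^ m * ss = (ss ^ 2) ^ (n + 1) := by rw [hm]; ring
        rw [this, ss_sq]
      calc 2 ^ m * ss ^ m * (2 ^ m * (Nat.fib m : ℤ√5) * ss)
          = (2 ^ m * 2 ^ m) * (ss ^ m * ss) * (Nat.fib m : ℤ√5) := by ring
        _ = 4 ^ m * 5 ^ (n + 1) * (Nat.fib m : ℤ√5) := by
            have h4m : (2 : ℤ√5) ^ m * 2 ^ m = 4 ^ m := by rw [← mul_pow]; norm_num
            rw [hs, h4m]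
    have h3 : ∑ i ∈ Finset.range (m + 1),
        (aa ^ (2 * i) + bb ^ (2 * i)) * 4 ^ (m - i) * (m.choose i : ℤ√5)
        = 5 * 4 ^ m * (∑ i ∈ Finset.range (m + 1),
            (m.choose i : ℤ√5) * (Nat.fib i : ℤ√5) ^ 2)
          + 2 * ((-4 : ℤ√5) + 4) ^ m := by
      rw [add_pow, Finset.mul_sum, Finset.mul_sum, ← Finset.sum_add_distrib]
      refine Finset.sum_congr rfl fun i hi => ?_
      have hile : i ≤ m := by simpa using Nat.lt_succ_iff.mp (Finset.mem_range.mp hi)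
      have h4 : (4 : ℤ√5) ^ i * 4 ^ (m - i) = 4 ^ m := by
        rw [← pow_add, Nat.add_sub_cancel' hile]
      rw [pow_sum]
      calc (5 * (Nat.fib i : ℤ√5) ^ 2 * 4 ^ i + 2 * (-4) ^ i) * 4 ^ (m - i) * (m.choose i : ℤ√5)
          = 5 * (4 ^ i * 4 ^ (m - i)) * ((m.choose i : ℤ√5) * (Nat.fib i : ℤ√5) ^ 2)
            + 2 * ((-4 : ℤ√5) ^ i * 4 ^ (m - i) * (m.choose i : ℤ√5)) := by ring
        _ = _ := by rw [h4]
    have hzero : ((-4 : ℤ√5) + 4) ^ m = 0 := by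
      simp [hm]
    rw [h1, h3, hzero] at h2
    calc 5 * 4 ^ m * ∑ i ∈ Finset.range (m + 1), (m.choose i : ℤ√5) * (Nat.fib i : ℤ√5) ^ 2
        = 4 ^ m * 5 ^ (n + 1) * (Nat.fib m : ℤ√5) := by
          rw [← h2]; ring
      _ = 5 * 4 ^ m * (5 ^ n * (Nat.fib m : ℤ√5)) := by ring
  have keyN : 5 * 4 ^ m * ∑ i ∈ Finset.range (m + 1), m.choose i * Nat.fib i ^ 2
      = 5 * 4 ^ m * (5 ^ n * Nat.fib m) := Nat.cast_injective key
  have hpos : 0 < 5 * 4 ^ m := by positivity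
  have := Nat.eq_of_mul_eq_mul_left hpos keyN
  simpa [hm, show 2 * n + 2 = m + 1 by omega] using this
end

section
/- For all natural numbers n, 5 times the sum over i from 0 to n of C(n,i)·F_i^3 equals 2^n·F_{2n} + 3·F_n. -/
open Finset

private lemma binom_step (f : ℕ → ℤ) (n : ℕ) :
    ∑ i ∈ Finset.range (n + 2), ((n + 1).choose i : ℤ) * f i
      = ∑ i ∈ Finset.range (n + 1), (n.choose i : ℤ) * f i
        + ∑ i ∈ Finset.range (n + 1), (n.choose i : ℤ) * f (i + 1) := by
  rw [Finset.sum_range_succ' (fun i => ((n + 1).choose i : ℤ) * f i)]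
  have h1 : ∀ i, (((n + 1).choose (i + 1) : ℤ)) = (n.choose i : ℤ) + (n.choose (i + 1) : ℤ) := by
    intro i
    rw [Nat.choose_succ_succ]
    push_cast
    ring
  have h2 : ∑ i ∈ Finset.range (n + 1), ((n + 1).choose (i + 1) : ℤ) * f (i + 1)
      = ∑ i ∈ Finset.range (n + 1), (n.choose i : ℤ) * f (i + 1)
        + ∑ i ∈ Finset.range (n + 1), (n.choose (i + 1) : ℤ) * f (i + 1) := by
    rw [← Finset.sum_add_distrib]
    refine Finset.sum_congr rfl fun i _ => ?_
    rw [h1]; ring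
  rw [h2]
  have h3 : ∑ i ∈ Finset.range (n + 1), (n.choose i : ℤ) * f i
      = (n.choose 0 : ℤ) * f 0 + ∑ i ∈ Finset.range n, (n.choose (i + 1) : ℤ) * f (i + 1) := by
    rw [Finset.sum_range_succ' (fun i => (n.choose i : ℤ) * f i)]
    ring
  have h4 : ∑ i ∈ Finset.range (n + 1), (n.choose (i + 1) : ℤ) * f (i + 1)
      = ∑ i ∈ Finset.range n, (n.choose (i + 1) : ℤ) * f (i + 1) := by
    rw [Finset.sum_range_succ, Nat.choose_succ_self]
    simp
  rw [h3, h4]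
  simp
  ring

private lemma sumA (n : ℕ) : ∀ k : ℕ,
    ∑ i ∈ Finset.range (n + 1), (n.choose i : ℤ) * Nat.fib (3 * i + k)
      = 2 ^ n * Nat.fib (2 * n + k) := by
  induction n with
  | zero => simp
  | succ n ih =>
    intro k
    rw [show n + 1 + 1 = n + 2 from rfl,
      binom_step (fun i => (Nat.fib (3 * i + k) : ℤ)) n]
    have e1 : ∀ i, (Nat.fib (3 * (i + 1) + k) : ℤ)
        = 2 * Nat.fib (3 * i + (k + 1)) + Nat.fib (3 * i + k) := by
      intro i
      have : 3 * (i + 1) + k = (3 * i + k) + 3 := by ring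
      rw [this, show (3*i+k) + 3 = ((3*i+k)+1) + 2 from rfl, Nat.fib_add_two,
        show (3*i+k) + 2 = ((3*i+k)) + 2 from rfl, Nat.fib_add_two]
      push_cast
      have : 3 * i + k + 1 = 3 * i + (k + 1) := by ring
      rw [this]
      ring
    have h2 : ∑ i ∈ Finset.range (n + 1), (n.choose i : ℤ) * Nat.fib (3 * (i + 1) + k)
        = 2 * (2 ^ n * Nat.fib (2 * n + (k + 1))) + 2 ^ n * Nat.fib (2 * n + k) := by
      rw [← ih (k+1), ← ih k]
      rw [Finset.mul_sum, ← Finset.sum_add_distrib]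
      refine Finset.sum_congr rfl fun i _ => ?_
      rw [e1]; ring
    rw [ih k, h2]
    have : 2 * (n + 1) + k = (2 * n + k) + 2 := by ring
    rw [this, Nat.fib_add_two]
    push_cast
    have : 2 * n + k + 1 = 2 * n + (k + 1) := by ring
    rw [this]
    ring

private lemma cassini (n : ℕ) :
    (Nat.fib (n + 1) : ℤ) ^ 2 - Nat.fib (n + 1) * Nat.fib n - (Nat.fib n : ℤ) ^ 2
      = (-1) ^ n := by
  induction n with
  | zero => simp
  | succ n ih =>
    rw [Nat.fib_add_two]
    push_cast
    have : ((Nat.fib n : ℤ) + Nat.fib (n + 1)) ^ 2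
        - ((Nat.fib n : ℤ) + Nat.fib (n + 1)) * Nat.fib (n + 1) - (Nat.fib (n + 1) : ℤ) ^ 2
        = -((Nat.fib (n + 1) : ℤ) ^ 2 - Nat.fib (n + 1) * Nat.fib n - (Nat.fib n : ℤ) ^ 2) := by
      ring
    rw [this, ih]
    ring

private lemma cube (n : ℕ) :
    (Nat.fib (3 * n) : ℤ) = 5 * (Nat.fib n : ℤ) ^ 3 + 3 * (-1) ^ n * Nat.fib n := by
  cases n with
  | zero => simp
  | succ n =>
    have h3 : 3 * (n + 1) = (2 * n + 1) + (n + 1) + 1 := by ring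
    rw [h3, Nat.fib_add, Nat.fib_two_mul_add_one,
      show (2 * n + 1) + 1 = 2 * n + 2 from rfl, Nat.fib_two_mul_add_two]
    have hc := cassini (n + 1)
    have hf : (Nat.fib (n + 2) : ℤ) = Nat.fib n + Nat.fib (n + 1) := by
      rw [Nat.fib_add_two]; push_cast; ring
    rw [show n + 1 + 1 = n + 2 from rfl, hf] at hc
    push_cast
    rw [hf]
    linear_combination 3 * (Nat.fib (n + 1) : ℤ) * hc

private lemma sumB (n : ℕ) :
    (∑ i ∈ Finset.range (n + 1), (n.choose i : ℤ) * ((-1) ^ i * Nat.fib i)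
        = -Nat.fib n)
      ∧ (∑ i ∈ Finset.range (n + 1), (n.choose i : ℤ) * ((-1) ^ i * Nat.fib (i + 1))
        = (Nat.fib (n + 1) : ℤ) - Nat.fib n) := by
  induction n with
  | zero => simp
  | succ n ih =>
    obtain ⟨ihU, ihV⟩ := ih
    constructor
    · rw [show n + 1 + 1 = n + 2 from rfl,
        binom_step (fun i => (-1) ^ i * (Nat.fib i : ℤ)) n]
      have : ∑ i ∈ Finset.range (n + 1), (n.choose i : ℤ) * ((-1) ^ (i + 1) * Nat.fib (i + 1))
          = -∑ i ∈ Finset.range (n + 1), (n.choose i : ℤ) * ((-1) ^ i * Nat.fib (i + 1)) := by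
        rw [← Finset.sum_neg_distrib]
        refine Finset.sum_congr rfl fun i _ => ?_
        ring
      rw [this, ihU, ihV]
      ring
    · rw [show n + 1 + 1 = n + 2 from rfl,
        binom_step (fun i => (-1) ^ i * (Nat.fib (i + 1) : ℤ)) n]
      have e : ∀ i : ℕ, ((-1 : ℤ)) ^ (i + 1) * Nat.fib (i + 1 + 1)
          = -((-1) ^ i * Nat.fib (i + 1)) - (-1) ^ i * Nat.fib i := by
        intro i
        rw [Nat.fib_add_two]
        push_cast
        ring
      have h2 : ∑ i ∈ Finset.range (n + 1), (n.choose i : ℤ) * ((-1) ^ (i + 1) * Nat.fib (i + 1 + 1))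
          = -∑ i ∈ Finset.range (n + 1), (n.choose i : ℤ) * ((-1) ^ i * Nat.fib (i + 1))
            - ∑ i ∈ Finset.range (n + 1), (n.choose i : ℤ) * ((-1) ^ i * Nat.fib i) := by
        rw [← Finset.sum_neg_distrib, ← Finset.sum_sub_distrib]
        refine Finset.sum_congr rfl fun i _ => ?_
        rw [e]; ring
      rw [h2, ihU, ihV]
      rw [show n + 1 + 1 = n + 2 from rfl, Nat.fib_add_two]
      push_cast
      ring

theorem stmt_5 (n : ℕ) :
    5 * ∑ i ∈ Finset.range (n + 1), n.choose i * Nat.fib i ^ 3 =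
      2 ^ n * Nat.fib (2 * n) + 3 * Nat.fib n := by
  have key : (5 : ℤ) * ∑ i ∈ Finset.range (n + 1), (n.choose i : ℤ) * (Nat.fib i : ℤ) ^ 3 =
      2 ^ n * Nat.fib (2 * n) + 3 * Nat.fib n := by
    have h1 : (5 : ℤ) * ∑ i ∈ Finset.range (n + 1), (n.choose i : ℤ) * (Nat.fib i : ℤ) ^ 3
        = ∑ i ∈ Finset.range (n + 1), (n.choose i : ℤ) * Nat.fib (3 * i + 0)
          - 3 * ∑ i ∈ Finset.range (n + 1), (n.choose i : ℤ) * ((-1) ^ i * Nat.fib i) := by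
      rw [Finset.mul_sum, Finset.mul_sum, ← Finset.sum_sub_distrib]
      refine Finset.sum_congr rfl fun i _ => ?_
      rw [Nat.add_zero, cube i]
      ring
    rw [h1, sumA n 0, (sumB n).1]
    push_cast
    ring
  exact_mod_cast key
end

section
/- For all natural numbers n, 2^n·F_{2n} + 3·F_n ≡ 0 (mod 5). -/
lemma fib20 (n : ℕ) : (Nat.fib (n + 20) : ZMod 5) = Nat.fib n := by
  have h := Nat.fib_add n 19
  have : n + 19 + 1 = n + 20 := by ring
  rw [this] at h
  rw [h]
  have h19 : Nat.fib 19 = 4181 := by norm_num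
  have h20 : Nat.fib 20 = 6765 := by norm_num
  rw [h19, h20]
  push_cast
  have e1 : (4181 : ZMod 5) = 1 := by decide
  have e2 : (6765 : ZMod 5) = 0 := by decide
  rw [e1, e2]
  ring

theorem stmt_7 (n : ℕ) : 5 ∣ 2 ^ n * Nat.fib (2 * n) + 3 * Nat.fib n := by
  have key : ∀ n : ℕ, ((2 ^ n * Nat.fib (2 * n) + 3 * Nat.fib n : ℕ) : ZMod 5) = 0 := by
    intro n
    induction n using Nat.strong_induction_on with
    | _ n ih =>
      rcases lt_or_ge n 20 with h | h
      · interval_cases n <;> decide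
      · obtain ⟨m, rfl⟩ : ∃ m, n = m + 20 := ⟨n - 20, by omega⟩
        have hm := ih m (by omega)
        have e1 : 2 * (m + 20) = 2 * m + 20 + 20 := by ring
        push_cast at hm ⊢
        rw [e1, fib20, fib20, fib20]
        rw [pow_add]
        rw [show ((2 : ZMod 5) ^ 20 = 1) by decide]
        rw [mul_one]
        exact hm
  have := key n
  rwa [ZMod.natCast_eq_zero_iff] at this
end

section
/- For all natural numbers n, 3^n·L_{2n} - 4·(-1)^n·L_n + 6·2^n ≡ 0 (mod 25), as integers. -/
def lZ (n : ℕ) : ZMod 25 := (lucas n : ZMod 25)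

lemma lZ_rec (n : ℕ) : lZ (n + 2) = lZ (n + 1) + lZ n := by
  simp [lZ, lucas]

lemma per (n : ℕ) : lZ (n + 20) = lZ n ∧ lZ (n + 21) = lZ (n + 1) := by
  induction n with
  | zero => constructor <;> · show ((lucas _ : ℤ) : ZMod 25) = _; norm_num [lucas]; try decide
  | succ k ih =>
    refine ⟨ih.2, ?_⟩
    have h1 : lZ (k + 22) = lZ (k + 21) + lZ (k + 20) := lZ_rec (k + 20)
    have h2 : lZ (k + 2) = lZ (k + 1) + lZ k := lZ_rec k
    have : k + 1 + 21 = k + 22 := by ring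
    rw [this, h1, ih.1, ih.2, ← h2]

lemma per_mul (q r : ℕ) : lZ (20 * q + r) = lZ r := by
  induction q with
  | zero => simp
  | succ k ih =>
    have : 20 * (k + 1) + r = (20 * k + r) + 20 := by ring
    rw [this, (per _).1, ih]

theorem stmt_8 (n : ℕ) :
    (25 : ℤ) ∣ 3 ^ n * lucas (2 * n) - 4 * (-1 : ℤ) ^ n * lucas n + 6 * 2 ^ n := by
  have := ZMod.intCast_zmod_eq_zero_iff_dvd
    (3 ^ n * lucas (2 * n) - 4 * (-1 : ℤ) ^ n * lucas n + 6 * 2 ^ n) 25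
  norm_num at this
  rw [← this]
  push_cast
  obtain ⟨q, r, hr, rfl⟩ : ∃ q r, r < 20 ∧ n = 20 * q + r :=
    ⟨n / 20, n % 20, Nat.mod_lt _ (by norm_num), (Nat.div_add_mod n 20).symm ▸ rfl⟩
  have hl : (lucas (20 * q + r) : ZMod 25) = lZ r := per_mul q r
  have hl2 : (lucas (2 * (20 * q + r)) : ZMod 25) = lZ (2 * r) := by
    have : 2 * (20 * q + r) = 20 * (2 * q) + 2 * r := by ring
    rw [this]; exact per_mul (2 * q) (2 * r)
  have e3 : (3 : ZMod 25) ^ 20 = 1 := by decide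
  have e2 : (2 : ZMod 25) ^ 20 = 1 := by decide
  have em : (-1 : ZMod 25) ^ 20 = 1 := by decide
  have h3 : (3 : ZMod 25) ^ (20 * q + r) = 3 ^ r := by
    rw [pow_add, pow_mul, e3, one_pow, one_mul]
  have h2 : (2 : ZMod 25) ^ (20 * q + r) = 2 ^ r := by
    rw [pow_add, pow_mul, e2, one_pow, one_mul]
  have hm : (-1 : ZMod 25) ^ (20 * q + r) = (-1) ^ r := by
    rw [pow_add, pow_mul, em, one_pow, one_mul]
  rw [hl, hl2, h3, h2, hm]
  interval_cases r <;> · simp only [lZ]; norm_num [lucas]; try decide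
end

section
/- For all natural numbers n, 5 times the sum over i from 0 to n of (-1)^i·C(n,i)·F_i^2 equals (-1)^n·L_n - 2^{n+1}. -/
lemma lucas_aux (x y : ℝ) (hx : x ^ 2 = x + 1) (hy : y ^ 2 = y + 1) (h1 : x + y = 1) :
    ∀ n : ℕ, (lucas n : ℝ) = x ^ n + y ^ n
  | 0 => by norm_num [lucas]
  | 1 => by simpa [lucas] using h1.symm
  | n + 2 => by
    have ih1 := lucas_aux x y hx hy h1 (n + 1)
    have ih2 := lucas_aux x y hx hy h1 n
    simp only [lucas, Int.cast_add, ih1, ih2]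
    linear_combination (-(x ^ n)) * hx + (-(y ^ n)) * hy

lemma main_aux (x y : ℝ) (hx : x ^ 2 = x + 1) (hy : y ^ 2 = y + 1) (h1 : x + y = 1)
    (n : ℕ)
    (hfib : ∀ i : ℕ, 5 * (Nat.fib i : ℝ) ^ 2 = (x ^ 2) ^ i + (y ^ 2) ^ i - 2 * (-1 : ℝ) ^ i) :
    5 * ∑ i ∈ Finset.range (n + 1), (-1 : ℝ) ^ i * (n.choose i : ℝ) * (Nat.fib i : ℝ) ^ 2 =
      (-1 : ℝ) ^ n * (lucas n : ℝ) - 2 ^ (n + 1) := by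
  have hsum : ∀ z : ℝ, ∑ i ∈ Finset.range (n + 1), (n.choose i : ℝ) * z ^ i
      = (z + 1) ^ n := by
    intro z
    rw [add_pow]
    simp [mul_comm]
  calc (5 : ℝ) * ∑ i ∈ Finset.range (n + 1),
        (-1 : ℝ) ^ i * (n.choose i : ℝ) * (Nat.fib i : ℝ) ^ 2
      = ∑ i ∈ Finset.range (n + 1),
        ((n.choose i : ℝ) * (-x ^ 2) ^ i + (n.choose i : ℝ) * (-y ^ 2) ^ i
          - 2 * ((n.choose i : ℝ) * 1 ^ i)) := by
        rw [Finset.mul_sum]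
        refine Finset.sum_congr rfl fun i _ => ?_
        have hf := hfib i
        have hneg : ((-1 : ℝ)) ^ i * ((-1 : ℝ)) ^ i = 1 := by
          rw [← mul_pow]; norm_num
        rw [neg_pow (x ^ 2), neg_pow (y ^ 2)]
        linear_combination ((-1 : ℝ) ^ i * (n.choose i : ℝ)) * hf
          - (2 * (n.choose i : ℝ)) * hneg
    _ = (-x ^ 2 + 1) ^ n + (-y ^ 2 + 1) ^ n - 2 * (1 + 1) ^ n := by
        rw [Finset.sum_sub_distrib, Finset.sum_add_distrib, hsum, hsum,
          ← Finset.mul_sum (Finset.range (n + 1)) (fun i => (n.choose i : ℝ) * 1 ^ i) 2, hsum]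
    _ = (-1 : ℝ) ^ n * (lucas n : ℝ) - 2 ^ (n + 1) := by
        rw [lucas_aux x y hx hy h1]
        have hx' : (-x ^ 2 + 1 : ℝ) = -x := by rw [hx]; ring
        have hy' : (-y ^ 2 + 1 : ℝ) = -y := by rw [hy]; ring
        rw [hx', hy', neg_pow, neg_pow]
        ring

theorem stmt_10 (n : ℕ) :
    5 * ∑ i ∈ Finset.range (n + 1), (-1 : ℤ) ^ i * (n.choose i : ℤ) * (Nat.fib i : ℤ) ^ 2 =
      (-1 : ℤ) ^ n * lucas n - 2 ^ (n + 1) := by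
  have key : (5 : ℝ) * ∑ i ∈ Finset.range (n + 1),
      (-1 : ℝ) ^ i * (n.choose i : ℝ) * (Nat.fib i : ℝ) ^ 2 =
      (-1 : ℝ) ^ n * (lucas n : ℝ) - 2 ^ (n + 1) := by
    open goldenRatio in
    refine main_aux φ ψ Real.goldenRatio_sq Real.goldenConj_sq Real.goldenRatio_add_goldenConj n fun i => ?_
    have hs : (Real.sqrt 5) ^ 2 = 5 := Real.sq_sqrt (by norm_num)
    have hphi : (φ : ℝ) ^ i * ψ ^ i = (-1 : ℝ) ^ i := by
      rw [← mul_pow, Real.goldenRatio_mul_goldenConj]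
    rw [Real.coe_fib_eq, div_pow, hs, mul_div_cancel₀ _ (by norm_num : (5 : ℝ) ≠ 0)]
    have habs : ∀ x y : ℝ, x ^ i * y ^ i = (-1 : ℝ) ^ i →
        (x ^ i - y ^ i) ^ 2 = (x ^ 2) ^ i + (y ^ 2) ^ i - 2 * (-1 : ℝ) ^ i := by
      intro x y hxy
      linear_combination (-2 : ℝ) * hxy
    exact habs φ ψ hphi
  exact_mod_cast key
end

section
/- For all natural numbers n, 5 times the sum over i from 0 to n of (-1)^i·C(n,i)·F_i^3 equals (-2)^n·F_n - 3·F_{2n}. -/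
open goldenRatio in
private lemma stmt_11_aux (n : ℕ) (a b s : ℝ) (hs : s ≠ 0) (hs2 : s ^ 2 = 5)
    (hab : a * b = -1) (ha2 : a ^ 2 = a + 1) (hb2 : b ^ 2 = b + 1)
    (hfib : ∀ m : ℕ, s * (Nat.fib m : ℝ) = a ^ m - b ^ m) :
    5 * ∑ i ∈ Finset.range (n + 1), (-1 : ℝ) ^ i * (n.choose i : ℝ) * (Nat.fib i : ℝ) ^ 3 =
      (-2 : ℝ) ^ n * (Nat.fib n : ℝ) - 3 * (Nat.fib (2 * n) : ℝ) := by
  have geom : ∀ x : ℝ, ∑ i ∈ Finset.range (n + 1), (n.choose i : ℝ) * x ^ i = (x + 1) ^ n := by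
    intro x
    rw [add_pow]
    exact Finset.sum_congr rfl fun i _ => by ring
  have key : s ^ 3 *
      (5 * ∑ i ∈ Finset.range (n + 1), (-1 : ℝ) ^ i * (n.choose i : ℝ) * (Nat.fib i : ℝ) ^ 3) =
      s ^ 3 * ((-2 : ℝ) ^ n * (Nat.fib n : ℝ) - 3 * (Nat.fib (2 * n) : ℝ)) := by
    have lhs : s ^ 3 *
        (5 * ∑ i ∈ Finset.range (n + 1), (-1 : ℝ) ^ i * (n.choose i : ℝ) * (Nat.fib i : ℝ) ^ 3) =
        ∑ i ∈ Finset.range (n + 1), (n.choose i : ℝ) *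
          (5 * (-a ^ 3) ^ i - 5 * (-b ^ 3) ^ i - 5 * (3 * a ^ i) + 5 * (3 * b ^ i)) := by
      rw [Finset.mul_sum, Finset.mul_sum]
      refine Finset.sum_congr rfl fun i _ => ?_
      have hP : (-a ^ 3) ^ i = (-1) ^ i * (a ^ i) ^ 3 := by
        rw [neg_pow, ← pow_mul, mul_comm 3 i, pow_mul]
      have hQ : (-b ^ 3) ^ i = (-1) ^ i * (b ^ i) ^ 3 := by
        rw [neg_pow, ← pow_mul, mul_comm 3 i, pow_mul]
      have hpq : a ^ i * b ^ i = (-1 : ℝ) ^ i := by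
        rw [← mul_pow, hab]
      have hone : ((-1 : ℝ) ^ i) * ((-1 : ℝ) ^ i) = 1 := by
        rw [← mul_pow]; norm_num
      have hF3 : s ^ 3 * 5 * (Nat.fib i : ℝ) ^ 3 = 5 * (s * (Nat.fib i : ℝ)) ^ 3 := by
        ring
      rw [hP, hQ]
      calc s ^ 3 * (5 * ((-1 : ℝ) ^ i * (n.choose i : ℝ) * (Nat.fib i : ℝ) ^ 3))
          = (-1 : ℝ) ^ i * (n.choose i : ℝ) * (s ^ 3 * 5 * (Nat.fib i : ℝ) ^ 3) := by ring
        _ = (-1 : ℝ) ^ i * (n.choose i : ℝ) * (5 * (a ^ i - b ^ i) ^ 3) := by rw [hF3, hfib]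
        _ = (n.choose i : ℝ) * (5 * ((-1) ^ i * (a ^ i) ^ 3) - 5 * ((-1) ^ i * (b ^ i) ^ 3)
              - 5 * (3 * a ^ i) + 5 * (3 * b ^ i)) := by
            linear_combination (-15 * (n.choose i : ℝ) * (-1 : ℝ) ^ i * (a ^ i - b ^ i)) * hpq +
              (-15 * (n.choose i : ℝ) * (a ^ i - b ^ i)) * hone
    rw [lhs]
    have split : ∑ i ∈ Finset.range (n + 1), (n.choose i : ℝ) *
          (5 * (-a ^ 3) ^ i - 5 * (-b ^ 3) ^ i - 5 * (3 * a ^ i) + 5 * (3 * b ^ i)) =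
        5 * (∑ i ∈ Finset.range (n + 1), (n.choose i : ℝ) * (-a ^ 3) ^ i)
        - 5 * (∑ i ∈ Finset.range (n + 1), (n.choose i : ℝ) * (-b ^ 3) ^ i)
        - 15 * (∑ i ∈ Finset.range (n + 1), (n.choose i : ℝ) * a ^ i)
        + 15 * (∑ i ∈ Finset.range (n + 1), (n.choose i : ℝ) * b ^ i) := by
      rw [Finset.mul_sum, Finset.mul_sum, Finset.mul_sum, Finset.mul_sum,
        ← Finset.sum_sub_distrib, ← Finset.sum_sub_distrib, ← Finset.sum_add_distrib]
      exact Finset.sum_congr rfl fun i _ => by ring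
    rw [split, geom, geom, geom, geom]
    have ha3 : -a ^ 3 + 1 = -2 * a := by linear_combination (-(a + 1)) * ha2
    have hb3 : -b ^ 3 + 1 = -2 * b := by linear_combination (-(b + 1)) * hb2
    have ha1 : a + 1 = a ^ 2 := ha2.symm
    have hb1 : b + 1 = b ^ 2 := hb2.symm
    rw [ha3, hb3, ha1, hb1, mul_pow, mul_pow, ← pow_mul, ← pow_mul]
    have h1 := hfib n
    have h2 := hfib (2 * n)
    have h3 : s ^ 3 = 5 * s := by linear_combination s * hs2
    rw [h3]
    linear_combination (-5 * (-2 : ℝ) ^ n) * h1 + 15 * h2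
  exact mul_left_cancel₀ (pow_ne_zero 3 hs) key

open goldenRatio in
theorem stmt_11 (n : ℕ) :
    5 * ∑ i ∈ Finset.range (n + 1), (-1 : ℤ) ^ i * (n.choose i : ℤ) * (Nat.fib i : ℤ) ^ 3 =
      (-2 : ℤ) ^ n * (Nat.fib n : ℤ) - 3 * (Nat.fib (2 * n) : ℤ) := by
  have sq5 : Real.sqrt 5 ^ 2 = 5 := Real.sq_sqrt (by norm_num)
  have hfib : ∀ m : ℕ, Real.sqrt 5 * (Nat.fib m : ℝ) = φ ^ m - ψ ^ m := by
    intro m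
    rw [Real.coe_fib_eq]
    field_simp
  have := stmt_11_aux n φ ψ (Real.sqrt 5) (by positivity) sq5 Real.goldenRatio_mul_goldenConj
    Real.goldenRatio_sq Real.goldenConj_sq hfib
  have h : ((5 * ∑ i ∈ Finset.range (n + 1),
      (-1 : ℤ) ^ i * (n.choose i : ℤ) * (Nat.fib i : ℤ) ^ 3 : ℤ) : ℝ) =
      (((-2 : ℤ) ^ n * (Nat.fib n : ℤ) - 3 * (Nat.fib (2 * n) : ℤ) : ℤ) : ℝ) := by
    push_cast
    convert this using 2
  exact_mod_cast h
end

section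
/- For all odd natural numbers n, 25 times the sum over i from 0 to n of (-1)^i·C(n,i)·F_i^4 equals -5^{(n+1)/2}·(F_{2n} + 4·F_n). -/
open goldenRatio Finset

private lemma key_term' (c p q e : ℝ) (h1 : p*q = e) (h2 : e*e = 1) :
    25 * (e * c * ((p - q)/Real.sqrt 5)^4) =
      c * (e * p^4) + c * (e * q^4) - 4*(c * p^2) - 4*(c * q^2) + 6*(c*e) := by
  have h5 : (Real.sqrt 5)^2 = 5 := Real.sq_sqrt (by norm_num)
  have h4 : ((p - q)/Real.sqrt 5)^4 = (p-q)^4 / 25 := by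
    rw [div_pow]; congr 1; nlinarith [h5]
  subst h1
  rw [h4]
  field_simp
  ring
  linear_combination (c*(-4*p^2 + 6*p*q - 4*q^2)) * h2

private lemma term_eq (n i : ℕ) :
    (25:ℝ) * ((-1:ℝ)^i * (n.choose i : ℝ) * (Nat.fib i : ℝ)^4)
      = (n.choose i:ℝ) * (-(φ^4))^i + (n.choose i:ℝ) * (-(ψ^4))^i
        - 4*((n.choose i:ℝ)*(φ^2)^i) - 4*((n.choose i:ℝ)*(ψ^2)^i)
        + 6*((n.choose i:ℝ)*(-1:ℝ)^i) := by
  have h1 : φ^i * ψ^i = (-1:ℝ)^i := by rw [← mul_pow, Real.goldenRatio_mul_goldenConj]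
  have h2 : (-1:ℝ)^i * (-1:ℝ)^i = 1 := by rw [← mul_pow]; norm_num
  have hp : (-(φ^4))^i = (-1:ℝ)^i * (φ^i)^4 := by
    rw [neg_pow, ← pow_mul, mul_comm 4 i, pow_mul]
  have hq : (-(ψ^4))^i = (-1:ℝ)^i * (ψ^i)^4 := by
    rw [neg_pow, ← pow_mul, mul_comm 4 i, pow_mul]
  have hp2 : (φ^2)^i = (φ^i)^2 := by rw [← pow_mul, mul_comm, pow_mul]
  have hq2 : (ψ^2)^i = (ψ^i)^2 := by rw [← pow_mul, mul_comm, pow_mul]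
  rw [Real.coe_fib_eq, hp, hq, hp2, hq2]
  have := key_term' (n.choose i) (φ^i) (ψ^i) ((-1)^i) h1 h2
  linarith [this]

private lemma binom (n : ℕ) (x : ℝ) :
    ∑ i ∈ range (n+1), (n.choose i:ℝ) * x^i = (x+1)^n := by
  rw [add_pow]
  exact Finset.sum_congr rfl fun i _ => by ring

private lemma E1 : (-(φ^4) + 1 : ℝ) = -(Real.sqrt 5 * φ^2) := by
  rw [← Real.goldenRatio_sub_goldenConj]
  linear_combination (-φ^2-1)*Real.goldenRatio_sq - φ*Real.goldenRatio_mul_goldenConj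

private lemma E2 : (-(ψ^4) + 1 : ℝ) = Real.sqrt 5 * ψ^2 := by
  rw [← Real.goldenRatio_sub_goldenConj]
  linear_combination (-ψ^2-1)*Real.goldenConj_sq - ψ*Real.goldenRatio_mul_goldenConj

private lemma E3 : (φ^2 + 1 : ℝ) = Real.sqrt 5 * φ := by
  rw [← Real.goldenRatio_sub_goldenConj]
  linear_combination Real.goldenRatio_mul_goldenConj

private lemma E4 : (ψ^2 + 1 : ℝ) = -(Real.sqrt 5 * ψ) := by
  rw [← Real.goldenRatio_sub_goldenConj]
  linear_combination Real.goldenRatio_mul_goldenConj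

private lemma binet (m : ℕ) : Real.sqrt 5 * (Nat.fib m : ℝ) = φ^m - ψ^m := by
  rw [Real.coe_fib_eq]
  have h5 : Real.sqrt 5 ≠ 0 := by positivity
  field_simp

private lemma real_version (n : ℕ) (hn : Odd n) :
    (25:ℝ) * ∑ i ∈ range (n + 1), (-1 : ℝ) ^ i * (n.choose i : ℝ) * (Nat.fib i : ℝ) ^ 4 =
      -(5 : ℝ) ^ ((n + 1) / 2) * ((Nat.fib (2 * n) : ℝ) + 4 * (Nat.fib n : ℝ)) := by
  obtain ⟨k, hk⟩ := hn
  rw [Finset.mul_sum]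
  rw [Finset.sum_congr rfl fun i _ => term_eq n i]
  rw [Finset.sum_add_distrib, Finset.sum_sub_distrib, Finset.sum_sub_distrib,
    Finset.sum_add_distrib]
  rw [← Finset.mul_sum, ← Finset.mul_sum, ← Finset.mul_sum]
  rw [binom, binom, binom, binom, binom]
  have h0 : ((-1:ℝ) + 1)^n = 0 := by
    rw [neg_add_cancel]
    exact zero_pow (by omega)
  rw [h0, E1, E2, E3, E4]
  have hodd : Odd n := ⟨k, hk⟩
  rw [hodd.neg_pow, hodd.neg_pow]
  have hf2 : φ^(2*n) - ψ^(2*n) = Real.sqrt 5 * (Nat.fib (2*n) : ℝ) := (binet _).symm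
  have hf1 : φ^n - ψ^n = Real.sqrt 5 * (Nat.fib n : ℝ) := (binet _).symm
  have hs : (Real.sqrt 5) * (Real.sqrt 5)^n = (5:ℝ)^((n+1)/2) := by
    have h5 : (Real.sqrt 5)^2 = 5 := Real.sq_sqrt (by norm_num)
    have h2 : (n+1)/2 = k+1 := by omega
    rw [h2, hk]
    calc Real.sqrt 5 * (Real.sqrt 5)^(2*k+1) = ((Real.sqrt 5)^2)^(k+1) := by ring
    _ = (5:ℝ)^(k+1) := by rw [h5]
  calc (-(Real.sqrt 5 * φ ^ 2) ^ n + (Real.sqrt 5 * ψ ^ 2) ^ n)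
        - 4 * (Real.sqrt 5 * φ) ^ n - 4 * -(Real.sqrt 5 * ψ) ^ n + 6 * 0
      = -((Real.sqrt 5)^n * (φ^(2*n) - ψ^(2*n))) - 4*((Real.sqrt 5)^n * (φ^n - ψ^n)) := by
        rw [mul_pow, mul_pow, mul_pow, mul_pow, ← pow_mul, ← pow_mul, mul_comm 2 n]
        ring
    _ = -(Real.sqrt 5 * (Real.sqrt 5)^n) * ((Nat.fib (2*n):ℝ) + 4 * (Nat.fib n:ℝ)) := by
        rw [hf1, hf2]; ring
    _ = -(5 : ℝ) ^ ((n + 1) / 2) * ((Nat.fib (2 * n) : ℝ) + 4 * (Nat.fib n : ℝ)) := by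
        rw [hs]

theorem stmt_13 (n : ℕ) (hn : Odd n) :
    25 * ∑ i ∈ Finset.range (n + 1), (-1 : ℤ) ^ i * (n.choose i : ℤ) * (Nat.fib i : ℤ) ^ 4 =
      -(5 : ℤ) ^ ((n + 1) / 2) * ((Nat.fib (2 * n) : ℤ) + 4 * (Nat.fib n : ℤ)) := by
  have H := real_version n hn
  exact_mod_cast H
end

section
/- For all natural numbers n, (-2)^n·F_n - 3·F_{2n} ≡ 0 (mod 5), as integers. -/
lemma five : (5 : ZMod 5) = 0 := by decide

lemma fib_mod5 (n : ℕ) : (3 : ZMod 5) * (Nat.fib n : ZMod 5) = (n : ZMod 5) * 3 ^ n := by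
  induction n using Nat.twoStepInduction with
  | zero => simp
  | one => simp
  | more n ih1 ih2 =>
    rw [Nat.fib_add_two]
    push_cast at ih1 ih2 ⊢
    linear_combination ih1 + ih2 - ((3:ZMod 5)^n * (n + 3)) * five

theorem stmt_15 (n : ℕ) :
    (5 : ℤ) ∣ (-2 : ℤ) ^ n * (Nat.fib n : ℤ) - 3 * (Nat.fib (2 * n) : ℤ) := by
  have h := (ZMod.intCast_zmod_eq_zero_iff_dvd ((-2 : ℤ) ^ n * (Nat.fib n : ℤ) - 3 * (Nat.fib (2 * n) : ℤ)) 5)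
  rw [show ((5:ℕ):ℤ) = 5 from rfl] at h
  rw [← h]
  push_cast
  have e2 : (-2 : ZMod 5) = 3 := by decide
  rw [e2]
  have h1 := fib_mod5 n
  have h2 := fib_mod5 (2 * n)
  push_cast at h2
  linear_combination (2 * (3:ZMod 5) ^ n) * h1 - h2 - ((3:ZMod 5)^n * (Nat.fib n : ZMod 5)) * five
end

section
/- The generating function of the cubes of Fibonacci numbers satisfies (1 - 4x - x^2)(1 + x - x^2)·∑_{n≥0} F_n^3 x^n = x·(1 - 2x - x^2) as formal power series over ℚ, where 4 = L_3 and -1 = -L_1 appear as the coefficients. -/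
open PowerSeries

theorem stmt_17 :
    (1 - 4 * X - X ^ 2) * (1 + X - X ^ 2) *
        PowerSeries.mk (fun n => ((Nat.fib n : ℚ)) ^ 3) =
      X * (1 - 2 * X - X ^ 2) := by
  have c3 : (C (R := ℚ) 3 : ℚ⟦X⟧) = 3 := map_ofNat _ 3
  have c6 : (C (R := ℚ) 6 : ℚ⟦X⟧) = 6 := map_ofNat _ 6
  have h : (1 - 4 * X - X ^ 2) * (1 + X - X ^ 2) *
        PowerSeries.mk (fun n => ((Nat.fib n : ℚ)) ^ 3)
      = PowerSeries.mk (fun n => ((Nat.fib n : ℚ)) ^ 3) * 1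
        - (PowerSeries.mk (fun n => ((Nat.fib n : ℚ)) ^ 3) * X ^ 1) * C (R := ℚ) 3
        - (PowerSeries.mk (fun n => ((Nat.fib n : ℚ)) ^ 3) * X ^ 2) * C (R := ℚ) 6
        + (PowerSeries.mk (fun n => ((Nat.fib n : ℚ)) ^ 3) * X ^ 3) * C (R := ℚ) 3
        + PowerSeries.mk (fun n => ((Nat.fib n : ℚ)) ^ 3) * X ^ 4 := by
    rw [c3, c6]; ring
  have c2 : (C (R := ℚ) 2 : ℚ⟦X⟧) = 2 := map_ofNat _ 2
  have hr : (X * (1 - 2 * X - X ^ 2) : ℚ⟦X⟧)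
      = X ^ 1 - X ^ 2 * C (R := ℚ) 2 - X ^ 3 := by rw [c2]; ring
  rw [h, hr]
  ext n
  simp only [map_add, map_sub, coeff_mul_C, coeff_mul_X_pow', coeff_mk, mul_one,
    map_one, coeff_one, coeff_X_pow]
  match n with
  | 0 => norm_num
  | 1 => norm_num [coeff_X, coeff_one]
  | 2 => norm_num [coeff_X, coeff_one]
  | 3 => norm_num [coeff_X, coeff_one]
  | (n+4) =>
    have h2 : ∀ m, (Nat.fib (m + 2) : ℚ) = Nat.fib m + Nat.fib (m+1) := by
      intro m; rw [Nat.fib_add_two]; push_cast; ring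
    have e4 : n + 4 - 1 = n + 3 := rfl
    have e3 : n + 4 - 2 = n + 2 := rfl
    have e2 : n + 4 - 3 = n + 1 := rfl
    have e1 : n + 4 - 4 = n := rfl
    have n1 : ¬(4 + n = 1) := by omega
    have n2 : ¬(4 + n = 2) := by omega
    have n3 : ¬(4 + n = 3) := by omega
    norm_num [coeff_X, coeff_one, e4, e3, e2, e1, n1, n2, n3]
    simp [n1, n2, n3]
    have f2 : (Nat.fib (n+2) : ℚ) = Nat.fib n + Nat.fib (n+1) := h2 n
    have f3 : (Nat.fib (n+3) : ℚ) = Nat.fib (n+1) + Nat.fib (n+2) := h2 (n+1)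
    have f4 : (Nat.fib (n+4) : ℚ) = Nat.fib (n+2) + Nat.fib (n+3) := h2 (n+2)
    rw [f4, f3, f2]
    ring
end
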